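/- Let n ≥ 4, let D and D̄ be star tree metrics on n taxa, and suppose the tropical mixture T = D⊕D̄ satisfies the four point condition: for every four distinct taxa i,j,k,l, the maximum of the three sums T(i,j)+T(k,l), T(i,k)+T(j,l), T(i,l)+T(j,k) is attained at least twice. Then T is a tree metric realized by a tree with at most one internal edge: there exist a subset I of {1,…,n}, a real number g ≥ 0, and weights e_i > 0 for all i, such that for all i ≠ j, T(i,j) = e_i + e_j + g if exactly one of i, j lies in I, and T(i,j) = e_i + e_j otherwise. -/
import Mathlib

lemma starC_bound {fi fj fk fl : ℝ} (h1 : fj ≤ fi) (h2 : fk < fj) (h3 : fl ≤ fk)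
    (hpos : 0 < fi + fj) (hneg : fk + fl < 0) :
    max (fi + fk) 0 + max (fj + fl) 0 < fi + fj ∧
    max (fi + fl) 0 + max (fj + fk) 0 < fi + fj := by
  constructor
  · rcases le_total (fj + fl) 0 with h | h
    · rw [max_eq_right h, add_zero]
      exact max_lt (by linarith) hpos
    · rw [max_eq_left h, max_eq_left (by linarith)]
      linarith
  · rcases le_total (fi + fl) 0 with h | h
    · rw [max_eq_right h, zero_add]
      exact max_lt (by linarith) hpos
    · rw [max_eq_left h]
      rcases le_total (fj + fk) 0 with h' | h'
      · rw [max_eq_right h', add_zero]; linarith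
      · rw [max_eq_left h']; linarith



/-- A star tree metric on `n` taxa: a dissimilarity map of the form
`D(i,j) = e i + e j` for `i ≠ j` (and `D(i,i) = 0`) with all pendant weights positive. -/
def IsStarTreeMetric {n : ℕ} (D : Fin n → Fin n → ℝ) : Prop :=
  ∃ e : Fin n → ℝ, (∀ i, 0 < e i) ∧ (∀ i, D i i = 0) ∧
    ∀ i j, i ≠ j → D i j = e i + e j

/-- if `n ≥ 4` and the tropical mixture `T = D ⊕ D̄` of two star
tree metrics satisfies the four point condition (for all four distinct taxa the
maximum of the three pair-sums is attained at least twice), then `T` is realized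
by a tree with at most one internal edge: there are a subset `I`, a weight
`g ≥ 0`, and pendant weights `e_i > 0` with `T(i,j) = e_i + e_j + g` when exactly
one of `i,j` lies in `I`, and `T(i,j) = e_i + e_j` otherwise, for all `i ≠ j`. -/
theorem mixture_fourpoint_implies_one_internal_edge
    (n : ℕ) (hn : 4 ≤ n) (D Dbar : Fin n → Fin n → ℝ)
    (hD : IsStarTreeMetric D) (hDbar : IsStarTreeMetric Dbar)
    (T : Fin n → Fin n → ℝ) (hT : ∀ i j, T i j = max (D i j) (Dbar i j))
    (hfour : ∀ i j k l : Fin n,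
      i ≠ j → i ≠ k → i ≠ l → j ≠ k → j ≠ l → k ≠ l →
      (T i j + T k l = T i k + T j l ∧ T i l + T j k ≤ T i j + T k l) ∨
      (T i j + T k l = T i l + T j k ∧ T i k + T j l ≤ T i j + T k l) ∨
      (T i k + T j l = T i l + T j k ∧ T i j + T k l ≤ T i k + T j l)) :
    ∃ (I : Finset (Fin n)) (g : ℝ) (e : Fin n → ℝ),
      0 ≤ g ∧ (∀ i, 0 < e i) ∧
      ∀ i j, i ≠ j →
        T i j = e i + e j +
          (if (i ∈ I ∧ j ∉ I) ∨ (i ∉ I ∧ j ∈ I) then g else 0) := by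
  obtain ⟨a, ha, -, hDa⟩ := hD
  obtain ⟨b, hb, -, hDb⟩ := hDbar
  set f : Fin n → ℝ := fun i => a i - b i with hf
  have hfd : ∀ i, f i = a i - b i := fun i => rfl
  have hTab : ∀ i j, i ≠ j → T i j = b i + b j + max (f i + f j) 0 := by
    intro i j hij
    rw [hT, hDa i j hij, hDb i j hij]
    rcases le_total (a i + a j) (b i + b j) with h | h
    · rw [max_eq_right h, max_eq_right (by rw [hfd, hfd]; linarith)]
      ring
    · rw [max_eq_left h, max_eq_left (by rw [hfd, hfd]; linarith)]
      rw [hfd, hfd]; ring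
  have starC : ∀ i j k l : Fin n, i ≠ j → i ≠ k → i ≠ l → j ≠ k → j ≠ l → k ≠ l →
      f j ≤ f i → f k ≤ f j → f l ≤ f k → 0 < f i + f j → f k + f l < 0 → f j = f k := by
    intro i j k l hij hik hil hjk hjl hkl h1 h2 h3 hpos hneg
    by_contra hne
    have h2' : f k < f j := h2.lt_of_ne (Ne.symm hne)
    obtain ⟨B1, B2⟩ := starC_bound h1 h2' h3 hpos hneg
    have H := hfour i j k l hij hik hil hjk hjl hkl
    rw [hTab i j hij, hTab k l hkl, hTab i k hik, hTab j l hjl,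
        hTab i l hil, hTab j k hjk] at H
    have hm1 : max (f i + f j) 0 = f i + f j := max_eq_left hpos.le
    have hm2 : max (f k + f l) 0 = 0 := max_eq_right hneg.le
    rcases H with ⟨h, h'⟩ | ⟨h, h'⟩ | ⟨h, h'⟩ <;> linarith
  by_cases hall : ∀ i j : Fin n, i ≠ j → a i + a j ≤ b i + b j
  · refine ⟨∅, 0, b, le_refl 0, hb, ?_⟩
    intro i j hij
    rw [hTab i j hij, max_eq_right (by rw [hfd, hfd]; linarith [hall i j hij])]
    simp
  push_neg at hall
  obtain ⟨p₀, q₀, hpq₀, hlt₀⟩ := hall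
  by_cases hall2 : ∀ i j : Fin n, i ≠ j → b i + b j ≤ a i + a j
  · refine ⟨∅, 0, a, le_refl 0, ha, ?_⟩
    intro i j hij
    rw [hTab i j hij, max_eq_left (by rw [hfd, hfd]; linarith [hall2 i j hij])]
    rw [hfd, hfd]
    simp
    ring
  push_neg at hall2
  obtain ⟨r₀, s₀, hrs₀, hlt₂⟩ := hall2
  -- mixed case: sort f
  set σ := Tuple.sort f with hσ
  set gs : Fin n → ℝ := fun j => f (σ j) with hgs
  have hm : Monotone gs := Tuple.monotone_sort f
  obtain ⟨i0, hi0v⟩ : ∃ i : Fin n, i.val = 0 := ⟨⟨0, by omega⟩, rfl⟩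
  obtain ⟨i1, hi1v⟩ : ∃ i : Fin n, i.val = 1 := ⟨⟨1, by omega⟩, rfl⟩
  obtain ⟨i2, hi2v⟩ : ∃ i : Fin n, i.val = n - 2 := ⟨⟨n - 2, by omega⟩, rfl⟩
  obtain ⟨i3, hi3v⟩ : ∃ i : Fin n, i.val = n - 1 := ⟨⟨n - 1, by omega⟩, rfl⟩
  have keytop : ∀ p q : Fin n, p ≠ q → f p + f q ≤ gs i2 + gs i3 := by
    intro p q hpq
    have hp : f p = gs (σ.symm p) := by rw [hgs]; simp
    have hq : f q = gs (σ.symm q) := by rw [hgs]; simp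
    have hne : σ.symm p ≠ σ.symm q := fun h => hpq (σ.symm.injective h)
    have hq3 : ∀ r : Fin n, r ≤ i3 := fun r =>
      Fin.le_def.mpr (by have := r.2; omega)
    rcases lt_or_gt_of_ne hne with h | h
    · have h2 : σ.symm p ≤ i2 := Fin.le_def.mpr
        (by have := Fin.lt_def.mp h; have := (σ.symm q).2; omega)
      rw [hp, hq]
      exact add_le_add (hm h2) (hm (hq3 _))
    · have h2 : σ.symm q ≤ i2 := Fin.le_def.mpr
        (by have := Fin.lt_def.mp h; have := (σ.symm p).2; omega)
      rw [hp, hq]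
      linarith [hm h2, hm (hq3 (σ.symm p))]
  have keybot : ∀ p q : Fin n, p ≠ q → gs i0 + gs i1 ≤ f p + f q := by
    intro p q hpq
    have hp : f p = gs (σ.symm p) := by rw [hgs]; simp
    have hq : f q = gs (σ.symm q) := by rw [hgs]; simp
    have hne : σ.symm p ≠ σ.symm q := fun h => hpq (σ.symm.injective h)
    have hq0 : ∀ r : Fin n, i0 ≤ r := fun r => Fin.le_def.mpr (by omega)
    rcases lt_or_gt_of_ne hne with h | h
    · have h2 : i1 ≤ σ.symm q := Fin.le_def.mpr
        (by have := Fin.lt_def.mp h; omega)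
      rw [hp, hq]
      exact add_le_add (hm (hq0 _)) (hm h2)
    · have h2 : i1 ≤ σ.symm p := Fin.le_def.mpr
        (by have := Fin.lt_def.mp h; omega)
      rw [hp, hq]
      linarith [hm h2, hm (hq0 (σ.symm q))]
  have htop0 : 0 < gs i2 + gs i3 :=
    lt_of_lt_of_le (show (0:ℝ) < f p₀ + f q₀ by rw [hfd, hfd]; linarith)
      (keytop p₀ q₀ hpq₀)
  have hbot0 : gs i0 + gs i1 < 0 :=
    lt_of_le_of_lt (keybot r₀ s₀ hrs₀)
      (show f r₀ + f s₀ < 0 by rw [hfd, hfd]; linarith)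
  have hdist : ∀ s t : Fin n, s.val ≠ t.val → σ s ≠ σ t :=
    fun s t hst h => hst (congrArg Fin.val (σ.injective h))
  have hc0 : f (σ i2) = f (σ i1) := by
    refine starC (σ i3) (σ i2) (σ i1) (σ i0)
      (hdist _ _ (by omega)) (hdist _ _ (by omega)) (hdist _ _ (by omega))
      (hdist _ _ (by omega)) (hdist _ _ (by omega)) (hdist _ _ (by omega))
      ?_ ?_ ?_ ?_ ?_
    · exact hm (Fin.le_def.mpr (by omega))
    · exact hm (Fin.le_def.mpr (by omega))
    · exact hm (Fin.le_def.mpr (by omega))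
    · have h' := htop0; rw [add_comm] at h'; exact h'
    · have h' := hbot0; rw [add_comm] at h'; exact h'
  obtain ⟨x1, hx1d⟩ : ∃ z : Fin n, z = σ i3 := ⟨_, rfl⟩
  obtain ⟨x0, hx0d⟩ : ∃ z : Fin n, z = σ i0 := ⟨_, rfl⟩
  obtain ⟨α, hαd⟩ : ∃ x : ℝ, x = f x1 := ⟨_, rfl⟩
  obtain ⟨β, hβd⟩ : ∃ x : ℝ, x = f x0 := ⟨_, rfl⟩
  obtain ⟨c, hcd⟩ : ∃ x : ℝ, x = f (σ i1) := ⟨_, rfl⟩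
  have hx10 : x1 ≠ x0 := by rw [hx1d, hx0d]; exact hdist _ _ (by omega)
  have hmid : ∀ m : Fin n, m ≠ x1 → m ≠ x0 → f m = c := by
    intro m h1 h0
    have hv0 : (σ.symm m).val ≠ 0 := by
      intro h
      apply h0
      have h' : σ.symm m = i0 := Fin.ext (by omega)
      rw [hx0d, ← h']
      simp
    have hv3 : (σ.symm m).val ≠ n - 1 := by
      intro h
      apply h1
      have h' : σ.symm m = i3 := Fin.ext (by omega)
      rw [hx1d, ← h']
      simp
    have hfm : f m = gs (σ.symm m) := by rw [hgs]; simp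
    have l1 : gs i1 ≤ gs (σ.symm m) := hm (Fin.le_def.mpr (by omega))
    have l2 : gs (σ.symm m) ≤ gs i2 := hm (Fin.le_def.mpr (by have := (σ.symm m).2; omega))
    have e1 : gs i1 = c := hcd.symm
    have e2 : gs i2 = c := hc0.trans hcd.symm
    rw [hfm]
    rw [e1] at l1
    rw [e2] at l2
    linarith
  have hca : c ≤ α := by
    have h := hm (show i1 ≤ i3 from Fin.le_def.mpr (by omega))
    have e1 : gs i1 = c := hcd.symm
    have e3 : gs i3 = α := by rw [hαd, hx1d]
    rw [e1, e3] at h; exact h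
  have hβc : β ≤ c := by
    have h := hm (show i0 ≤ i1 from Fin.le_def.mpr (by omega))
    have e1 : gs i1 = c := hcd.symm
    have e0 : gs i0 = β := by rw [hβd, hx0d]
    rw [e0, e1] at h; exact h
  have htop : 0 < α + c := by
    have e2 : gs i2 = c := hc0.trans hcd.symm
    have e3 : gs i3 = α := by rw [hαd, hx1d]
    rw [e2, e3] at htop0; linarith
  have hbot : β + c < 0 := by
    have e1 : gs i1 = c := hcd.symm
    have e0 : gs i0 = β := by rw [hβd, hx0d]
    rw [e0, e1] at hbot0; linarith
  obtain ⟨cp, cm, hsum, hcp0, hcm0, hmm, hbcm, hcaα⟩ :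
      ∃ cp cm : ℝ, cp + cm = c ∧ 0 ≤ cp ∧ cm ≤ 0 ∧ max (c + c) 0 = cp + cp ∧
        β ≤ cm - cp ∧ cp - cm ≤ α := by
    rcases le_total c 0 with h | h
    · exact ⟨0, c, by ring, le_refl 0, h, by rw [max_eq_right (by linarith)]; ring,
        by linarith, by linarith⟩
    · exact ⟨c, 0, by ring, h, le_refl 0, by rw [max_eq_left (by linarith)],
        by linarith, by linarith⟩
  obtain ⟨P, hPd, hPge, hP0⟩ :
      ∃ P : ℝ, P = max (α + β) 0 ∧ α + β ≤ P ∧ 0 ≤ P :=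
    ⟨_, rfl, le_max_left _ _, le_max_right _ _⟩
  obtain ⟨gg, hgg2⟩ : ∃ g : ℝ, 2 * g = α - (cp - cm) - P :=
    ⟨(α - (cp - cm) - P) / 2, by ring⟩
  have hg0 : 0 ≤ gg := by
    have hPle : P ≤ α - (cp - cm) := by
      rw [hPd]; exact max_le (by linarith) (by linarith)
    linarith
  obtain ⟨e, he1, he0, hem⟩ :
      ∃ e : Fin n → ℝ, e x1 = b x1 + α + cm - gg ∧ e x0 = b x0 - cp - gg ∧
        ∀ m, m ≠ x1 → m ≠ x0 → e m = b m + cp := by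
    refine ⟨fun i =>
      if i = x1 then b x1 + α + cm - gg else if i = x0 then b x0 - cp - gg else b i + cp,
      by simp, by simp [hx10.symm], ?_⟩
    intro m h1 h0
    simp [h1, h0]
  have hβab : β = a x0 - b x0 := hβd.trans (hfd x0)
  have hepos : ∀ i, 0 < e i := by
    intro i
    by_cases h1 : i = x1
    · rw [h1, he1]; linarith [hb x1, htop, hP0]
    by_cases h0 : i = x0
    · rw [h0, he0]; linarith [hb x0, ha x0, hPge, hbot]
    · rw [hem i h1 h0]; linarith [hb i]
  have tri : ∀ z : Fin n, z = x1 ∨ z = x0 ∨ (z ≠ x1 ∧ z ≠ x0) := by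
    intro z
    by_cases h1 : z = x1
    · exact Or.inl h1
    by_cases h0 : z = x0
    · exact Or.inr (Or.inl h0)
    · exact Or.inr (Or.inr ⟨h1, h0⟩)
  refine ⟨{x1, x0}, gg, e, hg0, hepos, ?_⟩
  intro i j hij
  have hmem1 : x1 ∈ ({x1, x0} : Finset (Fin n)) := by simp
  have hmem0 : x0 ∈ ({x1, x0} : Finset (Fin n)) := by simp
  rw [hTab i j hij]
  rcases tri i with hi | hi | ⟨hi, hi'⟩ <;> rcases tri j with hj | hj | ⟨hj, hj'⟩
  · exact absurd (hi.trans hj.symm) hij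
  · -- x1, x0
    rw [hi, hj, ← hαd, ← hβd, ← hPd, he1, he0, if_neg (by simp)]
    linarith
  · -- x1, middle
    rw [hi]
    have hjm : j ∉ ({x1, x0} : Finset (Fin n)) := by simp [hj, hj']
    rw [hmid j hj hj', ← hαd, max_eq_left htop.le, he1, hem j hj hj',
      if_pos (Or.inl ⟨hmem1, hjm⟩)]
    linarith
  · -- x0, x1
    rw [hi, hj, show f x0 + f x1 = α + β by rw [hαd, hβd]; ring, ← hPd, he1, he0,
      if_neg (by simp)]
    linarith
  · exact absurd (hi.trans hj.symm) hij
  · -- x0, middle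
    rw [hi]
    have hjm : j ∉ ({x1, x0} : Finset (Fin n)) := by simp [hj, hj']
    rw [hmid j hj hj', ← hβd, max_eq_right hbot.le, he0, hem j hj hj',
      if_pos (Or.inl ⟨hmem0, hjm⟩)]
    linarith
  · -- middle, x1
    rw [hj]
    have him : i ∉ ({x1, x0} : Finset (Fin n)) := by simp [hi, hi']
    rw [hmid i hi hi', ← hαd, max_eq_left (by linarith), he1, hem i hi hi',
      if_pos (Or.inr ⟨him, hmem1⟩)]
    linarith
  · -- middle, x0
    rw [hj]
    have him : i ∉ ({x1, x0} : Finset (Fin n)) := by simp [hi, hi']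
    rw [hmid i hi hi', ← hβd, max_eq_right (by linarith), he0, hem i hi hi',
      if_pos (Or.inr ⟨him, hmem0⟩)]
    linarith
  · -- middle, middle
    have him : i ∉ ({x1, x0} : Finset (Fin n)) := by simp [hi, hi']
    have hjm : j ∉ ({x1, x0} : Finset (Fin n)) := by simp [hj, hj']
    rw [hmid i hi hi', hmid j hj hj', hmm, hem i hi hi', hem j hj hj',
      if_neg (by simp [hi, hi', hj, hj'])]
    linarith
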